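/- Under the hypotheses that g : Δ → ℝ is co-ordinated convex and f is co-ordinated g-convex dominated on Δ = [a,b] × [c,d], with H_φ(t,s) = (1/((b-a)(d-c))) ∫_a^b ∫_c^d φ(tx+(1-t)(a+b)/2, sy+(1-s)(c+d)/2) dx dy, one has 0 ≤ |H_f(t₂,s₂) - H_f(t₁,s₁)| ≤ H_g(t₂,s₂) - H_g(t₁,s₁) for all 0 ≤ t₁ ≤ t₂ ≤ 1 and 0 ≤ s₁ ≤ s₂ ≤ 1. -/

import Mathlib

open MeasureTheory

def ConvexDominated (I : Set ℝ) (ψ φ : ℝ → ℝ) : Prop :=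
  ∀ u ∈ I, ∀ v ∈ I, ∀ l : ℝ, l ∈ Set.Icc (0:ℝ) 1 →
    |l * φ u + (1 - l) * φ v - φ (l * u + (1 - l) * v)| ≤
      l * ψ u + (1 - l) * ψ v - ψ (l * u + (1 - l) * v)

def CoordConvexDominated (a b c d : ℝ) (g f : ℝ → ℝ → ℝ) : Prop :=
  (∀ x ∈ Set.Icc a b, ConvexDominated (Set.Icc c d) (fun u => g x u) (fun u => f x u)) ∧
  (∀ y ∈ Set.Icc c d, ConvexDominated (Set.Icc a b) (fun w => g w y) (fun w => f w y))

def CoordConvexOn (a b c d : ℝ) (f : ℝ → ℝ → ℝ) : Prop :=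
  (∀ y ∈ Set.Icc c d, ConvexOn ℝ (Set.Icc a b) (fun x => f x y)) ∧
  (∀ x ∈ Set.Icc a b, ConvexOn ℝ (Set.Icc c d) (fun y => f x y))

/-- The Dragomir mapping `H` associated to a function on `[a,b] × [c,d]`. -/
noncomputable def Hmap (a b c d : ℝ) (φ : ℝ → ℝ → ℝ) (t s : ℝ) : ℝ :=
  (1 / ((b - a) * (d - c))) *
    ∫ x in a..b, ∫ y in c..d,
      φ (t * x + (1 - t) * (a + b) / 2) (s * y + (1 - s) * (c + d) / 2)

namespace Drag

open Set

variable {α β : ℝ}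

lemma comb_mem {u v l : ℝ} (hu : u ∈ Icc α β) (hv : v ∈ Icc α β)
    (hl0 : 0 ≤ l) (hl1 : l ≤ 1) : l * u + (1 - l) * v ∈ Icc α β := by
  obtain ⟨h1, h2⟩ := hu; obtain ⟨h3, h4⟩ := hv
  constructor <;> nlinarith

lemma aff_mem {t x : ℝ} (hx : x ∈ Icc α β) (ht0 : 0 ≤ t) (ht1 : t ≤ 1) :
    t * x + (1 - t) * (α + β) / 2 ∈ Icc α β := by
  obtain ⟨h1, h2⟩ := hx
  constructor <;> nlinarith

lemma convexOn_intervalIntegrable (hab : α < β) {p : ℝ → ℝ}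
    (hp : ConvexOn ℝ (Icc α β) p) : IntervalIntegrable p volume α β := by
  rw [intervalIntegrable_iff_integrableOn_Ioo_of_le hab.le]
  have hcont : ContinuousOn p (Ioo α β) := by
    have := hp.continuousOn_interior; rwa [interior_Icc] at this
  set M := max (p α) (p β) with hM
  set L := 2 * p ((α + β) / 2) - M with hL
  have hub : ∀ x ∈ Icc α β, p x ≤ M := by
    intro x hx
    exact hp.le_on_segment (left_mem_Icc.2 hab.le) (right_mem_Icc.2 hab.le)
      (by rwa [segment_eq_Icc hab.le])
  have hlb : ∀ x ∈ Icc α β, L ≤ p x := by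
    intro x hx
    have hx' : α + β - x ∈ Icc α β := ⟨by linarith [hx.2], by linarith [hx.1]⟩
    have key := hp.2 hx hx' (by norm_num : (0:ℝ) ≤ 1/2) (by norm_num : (0:ℝ) ≤ 1/2)
      (by norm_num : (1/2 : ℝ) + 1/2 = 1)
    simp only [smul_eq_mul] at key
    have harg : (1/2 : ℝ) * x + (1/2 : ℝ) * (α + β - x) = (α + β) / 2 := by ring
    rw [harg] at key
    have := hub _ hx'
    rw [hL]; linarith
  refine ⟨hcont.aestronglyMeasurable measurableSet_Ioo, ?_⟩
  apply HasFiniteIntegral.restrict_of_bounded (C := |M| + |L|) measure_Ioo_lt_top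
  rw [ae_restrict_iff' measurableSet_Ioo]
  filter_upwards with x hx
  have h1 := hub x (Ioo_subset_Icc_self hx)
  have h2 := hlb x (Ioo_subset_Icc_self hx)
  rw [Real.norm_eq_abs, abs_le]
  constructor
  · have := neg_abs_le L; have := abs_nonneg M; linarith
  · have := le_abs_self M; have := abs_nonneg L; linarith

lemma dom_convexOn_add {I : Set ℝ} (hI : Convex ℝ I) {q p : ℝ → ℝ}
    (h : ConvexDominated I q p) : ConvexOn ℝ I (fun x => q x + p x) := by
  refine ⟨hI, fun x hx y hy l μ hl hμ hlμ => ?_⟩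
  have hμ' : μ = 1 - l := by linarith
  subst hμ'
  have key := h x hx y hy l ⟨hl, by linarith⟩
  rw [abs_le] at key
  simp only [smul_eq_mul]
  nlinarith [key.1]

lemma dom_convexOn_sub {I : Set ℝ} (hI : Convex ℝ I) {q p : ℝ → ℝ}
    (h : ConvexDominated I q p) : ConvexOn ℝ I (fun x => q x - p x) := by
  refine ⟨hI, fun x hx y hy l μ hl hμ hlμ => ?_⟩
  have hμ' : μ = 1 - l := by linarith
  subst hμ'
  have key := h x hx y hy l ⟨hl, by linarith⟩
  rw [abs_le] at key
  simp only [smul_eq_mul]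
  nlinarith [key.2]

lemma dom_integrable_snd (hab : α < β) {q p : ℝ → ℝ}
    (h : ConvexDominated (Icc α β) q p) : IntervalIntegrable p volume α β := by
  have h1 := convexOn_intervalIntegrable hab (dom_convexOn_add (convex_Icc α β) h)
  have h2 := convexOn_intervalIntegrable hab (dom_convexOn_sub (convex_Icc α β) h)
  have h3 := (h1.sub h2).const_mul (1/2 : ℝ)
  have e : (fun x => (1/2 : ℝ) * ((q x + p x) - (q x - p x))) = p := by
    funext x; ring
  rwa [e] at h3

lemma dom_integrable_fst (hab : α < β) {q p : ℝ → ℝ}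
    (h : ConvexDominated (Icc α β) q p) : IntervalIntegrable q volume α β := by
  have h1 := convexOn_intervalIntegrable hab (dom_convexOn_add (convex_Icc α β) h)
  have h2 := convexOn_intervalIntegrable hab (dom_convexOn_sub (convex_Icc α β) h)
  have h3 := (h1.add h2).const_mul (1/2 : ℝ)
  have e : (fun x => (1/2 : ℝ) * ((q x + p x) + (q x - p x))) = q := by
    funext x; ring
  rwa [e] at h3

/-- `Hone α β p t = ∫_α^β p (t x + (1-t)(α+β)/2) dx`. -/
noncomputable def Hone (α β : ℝ) (p : ℝ → ℝ) (t : ℝ) : ℝ :=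
  ∫ x in α..β, p (t * x + (1 - t) * (α + β) / 2)

lemma integrable_affine (hab : α < β) {p : ℝ → ℝ}
    (hp : IntervalIntegrable p volume α β) {t : ℝ} (ht0 : 0 ≤ t) (ht1 : t ≤ 1) :
    IntervalIntegrable (fun x => p (t * x + (1 - t) * (α + β) / 2)) volume α β := by
  rcases eq_or_lt_of_le ht0 with h0 | h0
  · simp only [← h0, zero_mul, zero_add, sub_zero, one_mul]
    exact intervalIntegrable_const
  · set c := (1 - t) * (α + β) / 2 with hc
    have h1 : IntervalIntegrable p volume (t * α + c) (t * β + c) := by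
      apply hp.mono_set
      rw [uIcc_of_le hab.le]
      apply uIcc_subset_Icc
      · exact aff_mem (left_mem_Icc.2 hab.le) ht0 ht1
      · exact aff_mem (right_mem_Icc.2 hab.le) ht0 ht1
    have h2 : IntervalIntegrable (fun x => p (x + c)) volume (t * α) (t * β) := by
      have := h1.comp_add_right c
      simpa using this
    have h3 := h2.comp_mul_left (c := t)
    have e1 : t * α / t = α := by field_simp
    have e2 : t * β / t = β := by field_simp
    rw [e1, e2] at h3
    exact h3

lemma integrable_affine_reflect (hab : α < β) {p : ℝ → ℝ}
    (hp : IntervalIntegrable p volume α β) {t : ℝ} (ht0 : 0 ≤ t) (ht1 : t ≤ 1) :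
    IntervalIntegrable (fun x => p (t * (α + β - x) + (1 - t) * (α + β) / 2))
      volume α β := by
  have h1 := (integrable_affine hab hp ht0 ht1).comp_sub_left (α + β)
  have e1 : α + β - α = β := by ring
  have e2 : α + β - β = α := by ring
  rw [e1, e2] at h1
  exact h1.symm

lemma integral_reflect (p : ℝ → ℝ) (t : ℝ) :
    (∫ x in α..β, p (t * (α + β - x) + (1 - t) * (α + β) / 2)) = Hone α β p t := by
  have := intervalIntegral.integral_comp_sub_left
    (a := α) (b := β) (fun y => p (t * y + (1 - t) * (α + β) / 2)) (α + β)
  rw [Hone]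
  have e1 : α + β - α = β := by ring
  have e2 : α + β - β = α := by ring
  rw [e1, e2] at this
  exact this

lemma abs_integral_le (hab : α ≤ β) {F G : ℝ → ℝ}
    (hF : IntervalIntegrable F volume α β) (hG : IntervalIntegrable G volume α β)
    (h : ∀ x ∈ Icc α β, |F x| ≤ G x) :
    |∫ x in α..β, F x| ≤ ∫ x in α..β, G x :=
  (intervalIntegral.abs_integral_le_integral_abs hab).trans
    (intervalIntegral.integral_mono_on hab hF.abs hG h)


lemma hone_step (hab : α < β) {q p : ℝ → ℝ}
    (hd : ConvexDominated (Icc α β) q p) {t : ℝ} (ht0 : 0 ≤ t) (ht1 : t ≤ 1) :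
    |Hone α β p t - (β - α) * p ((α + β) / 2)| ≤
      Hone α β q t - (β - α) * q ((α + β) / 2) := by
  have hp := dom_integrable_snd hab hd
  have hq := dom_integrable_fst hab hd
  have hm : (α + β) / 2 ∈ Icc α β := ⟨by linarith, by linarith⟩
  set m : ℝ := (α + β) / 2 with hmdef
  -- integrable pieces
  have Ip := integrable_affine hab hp ht0 ht1
  have Ip' := integrable_affine_reflect hab hp ht0 ht1
  have Iq := integrable_affine hab hq ht0 ht1
  have Iq' := integrable_affine_reflect hab hq ht0 ht1
  set F : ℝ → ℝ := fun x => (1/2 : ℝ) * p (t * x + (1 - t) * (α + β) / 2)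
    + (1 - 1/2 : ℝ) * p (t * (α + β - x) + (1 - t) * (α + β) / 2) - p m with hF
  set G : ℝ → ℝ := fun x => (1/2 : ℝ) * q (t * x + (1 - t) * (α + β) / 2)
    + (1 - 1/2 : ℝ) * q (t * (α + β - x) + (1 - t) * (α + β) / 2) - q m with hG
  have hFint : IntervalIntegrable F volume α β :=
    ((Ip.const_mul _).add (Ip'.const_mul _)).sub intervalIntegrable_const
  have hGint : IntervalIntegrable G volume α β :=
    ((Iq.const_mul _).add (Iq'.const_mul _)).sub intervalIntegrable_const
  have hpt : ∀ x ∈ Icc α β, |F x| ≤ G x := by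
    intro x hx
    have hx' : α + β - x ∈ Icc α β := ⟨by linarith [hx.2], by linarith [hx.1]⟩
    have key := hd _ (aff_mem hx ht0 ht1) _ (aff_mem hx' ht0 ht1) (1/2 : ℝ)
      ⟨by norm_num, by norm_num⟩
    have e : (1/2 : ℝ) * (t * x + (1 - t) * (α + β) / 2)
        + (1 - 1/2 : ℝ) * (t * (α + β - x) + (1 - t) * (α + β) / 2) = m := by
      rw [hmdef]; ring
    rw [e] at key
    exact key
  have hIF : (∫ x in α..β, F x) = Hone α β p t - (β - α) * p m := by
    rw [hF]
    rw [intervalIntegral.integral_sub ((Ip.const_mul _).add (Ip'.const_mul _))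
      intervalIntegrable_const]
    rw [intervalIntegral.integral_add (Ip.const_mul _) (Ip'.const_mul _)]
    rw [intervalIntegral.integral_const_mul, intervalIntegral.integral_const_mul,
      intervalIntegral.integral_const, integral_reflect]
    rw [Hone, smul_eq_mul]
    ring
  have hIG : (∫ x in α..β, G x) = Hone α β q t - (β - α) * q m := by
    rw [hG]
    rw [intervalIntegral.integral_sub ((Iq.const_mul _).add (Iq'.const_mul _))
      intervalIntegrable_const]
    rw [intervalIntegral.integral_add (Iq.const_mul _) (Iq'.const_mul _)]
    rw [intervalIntegral.integral_const_mul, intervalIntegral.integral_const_mul,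
      intervalIntegral.integral_const, integral_reflect]
    rw [Hone, smul_eq_mul]
    ring
  have := abs_integral_le hab.le hFint hGint hpt
  rw [hIF, hIG] at this
  exact this

lemma hone_key (hab : α < β) {q p : ℝ → ℝ}
    (hd : ConvexDominated (Icc α β) q p) {t₁ t₂ : ℝ}
    (h0 : 0 ≤ t₁) (h12 : t₁ ≤ t₂) (h1 : t₂ ≤ 1) :
    |Hone α β p t₂ - Hone α β p t₁| ≤ Hone α β q t₂ - Hone α β q t₁ := by
  have hp := dom_integrable_snd hab hd
  have hq := dom_integrable_fst hab hd
  have hm : (α + β) / 2 ∈ Icc α β := ⟨by linarith, by linarith⟩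
  rcases eq_or_lt_of_le (h0.trans h12) with h20 | h20
  · have ht1 : t₁ = 0 := le_antisymm (h12.trans h20.symm.le) h0
    rw [ht1, ← h20]; simp
  · set l : ℝ := t₁ / t₂ with hldef
    have hl0 : 0 ≤ l := div_nonneg h0 h20.le
    have hl1 : l ≤ 1 := (div_le_one h20).2 h12
    have ht10 : 0 ≤ t₂ := h20.le
    have ht11 : t₁ ≤ 1 := h12.trans h1
    set m : ℝ := (α + β) / 2 with hmdef
    have Ip2 := integrable_affine hab hp ht10 h1
    have Ip1 := integrable_affine hab hp h0 ht11
    have Iq2 := integrable_affine hab hq ht10 h1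
    have Iq1 := integrable_affine hab hq h0 ht11
    set F : ℝ → ℝ := fun x => l * p (t₂ * x + (1 - t₂) * (α + β) / 2)
      + (1 - l) * p m - p (t₁ * x + (1 - t₁) * (α + β) / 2) with hF
    set G : ℝ → ℝ := fun x => l * q (t₂ * x + (1 - t₂) * (α + β) / 2)
      + (1 - l) * q m - q (t₁ * x + (1 - t₁) * (α + β) / 2) with hG
    have hFint : IntervalIntegrable F volume α β :=
      ((Ip2.const_mul _).add intervalIntegrable_const).sub Ip1
    have hGint : IntervalIntegrable G volume α β :=
      ((Iq2.const_mul _).add intervalIntegrable_const).sub Iq1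
    have hpt : ∀ x ∈ Icc α β, |F x| ≤ G x := by
      intro x hx
      have key := hd _ (aff_mem hx ht10 h1) _ hm l ⟨hl0, hl1⟩
      have e : l * (t₂ * x + (1 - t₂) * (α + β) / 2) + (1 - l) * ((α + β) / 2)
          = t₁ * x + (1 - t₁) * (α + β) / 2 := by
        rw [hldef]; field_simp; ring
      rw [e] at key
      exact key
    have hIF : (∫ x in α..β, F x) = l * Hone α β p t₂ + (1 - l) * ((β - α) * p m)
        - Hone α β p t₁ := by
      rw [hF]
      rw [intervalIntegral.integral_sub ((Ip2.const_mul _).add intervalIntegrable_const) Ip1]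
      rw [intervalIntegral.integral_add (Ip2.const_mul _) intervalIntegrable_const]
      rw [intervalIntegral.integral_const_mul, intervalIntegral.integral_const]
      rw [Hone, Hone, smul_eq_mul]
      ring
    have hIG : (∫ x in α..β, G x) = l * Hone α β q t₂ + (1 - l) * ((β - α) * q m)
        - Hone α β q t₁ := by
      rw [hG]
      rw [intervalIntegral.integral_sub ((Iq2.const_mul _).add intervalIntegrable_const) Iq1]
      rw [intervalIntegral.integral_add (Iq2.const_mul _) intervalIntegrable_const]
      rw [intervalIntegral.integral_const_mul, intervalIntegral.integral_const]
      rw [Hone, Hone, smul_eq_mul]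
      ring
    have main := abs_integral_le hab.le hFint hGint hpt
    rw [hIF, hIG] at main
    have step := hone_step hab hd ht10 h1
    rw [← hmdef] at step
    set A := Hone α β p t₂; set B := Hone α β p t₁; set C := (β - α) * p m
    set A' := Hone α β q t₂; set B' := Hone α β q t₁; set C' := (β - α) * q m
    have tri : |A - B| ≤ |l * A + (1 - l) * C - B| + (1 - l) * |A - C| := by
      have h := abs_add_le (l * A + (1 - l) * C - B) ((1 - l) * (A - C))
      have e : (l * A + (1 - l) * C - B) + (1 - l) * (A - C) = A - B := by ring
      rw [e] at h
      rw [abs_mul, abs_of_nonneg (by linarith : (0:ℝ) ≤ 1 - l)] at h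
      exact h
    have hmul : (1 - l) * |A - C| ≤ (1 - l) * (A' - C') :=
      mul_le_mul_of_nonneg_left step (by linarith)
    have expand : (l * A' + (1 - l) * C' - B') + (1 - l) * (A' - C') = A' - B' := by ring
    linarith


end Drag

namespace Drag

open Set

/-- Inner integral in the second variable. -/
noncomputable def Phi (c d : ℝ) (φ : ℝ → ℝ → ℝ) (s x : ℝ) : ℝ :=
  ∫ y in c..d, φ x (s * y + (1 - s) * (c + d) / 2)

lemma phi_dominated {a b c d : ℝ} (hab : a < b) (hcd : c < d) {g f : ℝ → ℝ → ℝ}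
    (hdom : CoordConvexDominated a b c d g f) {s : ℝ} (hs0 : 0 ≤ s) (hs1 : s ≤ 1) :
    ConvexDominated (Icc a b) (Phi c d g s) (Phi c d f s) := by
  intro u hu v hv l hl
  have hw : l * u + (1 - l) * v ∈ Icc a b := comb_mem hu hv hl.1 hl.2
  have Ifu : IntervalIntegrable (fun y => f u (s * y + (1 - s) * (c + d) / 2)) volume c d :=
    integrable_affine hcd (dom_integrable_snd hcd (hdom.1 u hu)) hs0 hs1
  have Ifv : IntervalIntegrable (fun y => f v (s * y + (1 - s) * (c + d) / 2)) volume c d :=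
    integrable_affine hcd (dom_integrable_snd hcd (hdom.1 v hv)) hs0 hs1
  have Ifw : IntervalIntegrable
      (fun y => f (l * u + (1 - l) * v) (s * y + (1 - s) * (c + d) / 2)) volume c d :=
    integrable_affine hcd (dom_integrable_snd hcd (hdom.1 _ hw)) hs0 hs1
  have Igu : IntervalIntegrable (fun y => g u (s * y + (1 - s) * (c + d) / 2)) volume c d :=
    integrable_affine hcd (dom_integrable_fst hcd (hdom.1 u hu)) hs0 hs1
  have Igv : IntervalIntegrable (fun y => g v (s * y + (1 - s) * (c + d) / 2)) volume c d :=
    integrable_affine hcd (dom_integrable_fst hcd (hdom.1 v hv)) hs0 hs1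
  have Igw : IntervalIntegrable
      (fun y => g (l * u + (1 - l) * v) (s * y + (1 - s) * (c + d) / 2)) volume c d :=
    integrable_affine hcd (dom_integrable_fst hcd (hdom.1 _ hw)) hs0 hs1
  set F : ℝ → ℝ := fun y => l * f u (s * y + (1 - s) * (c + d) / 2)
    + (1 - l) * f v (s * y + (1 - s) * (c + d) / 2)
    - f (l * u + (1 - l) * v) (s * y + (1 - s) * (c + d) / 2) with hFdef
  set G : ℝ → ℝ := fun y => l * g u (s * y + (1 - s) * (c + d) / 2)
    + (1 - l) * g v (s * y + (1 - s) * (c + d) / 2)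
    - g (l * u + (1 - l) * v) (s * y + (1 - s) * (c + d) / 2) with hGdef
  have hFint : IntervalIntegrable F volume c d :=
    ((Ifu.const_mul _).add (Ifv.const_mul _)).sub Ifw
  have hGint : IntervalIntegrable G volume c d :=
    ((Igu.const_mul _).add (Igv.const_mul _)).sub Igw
  have hpt : ∀ y ∈ Icc c d, |F y| ≤ G y := by
    intro y hy
    exact hdom.2 _ (aff_mem hy hs0 hs1) u hu v hv l hl
  have hIF : (∫ y in c..d, F y)
      = l * Phi c d f s u + (1 - l) * Phi c d f s v - Phi c d f s (l * u + (1 - l) * v) := by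
    rw [hFdef]
    rw [intervalIntegral.integral_sub ((Ifu.const_mul _).add (Ifv.const_mul _)) Ifw]
    rw [intervalIntegral.integral_add (Ifu.const_mul _) (Ifv.const_mul _)]
    rw [intervalIntegral.integral_const_mul, intervalIntegral.integral_const_mul]
    simp only [Phi]
  have hIG : (∫ y in c..d, G y)
      = l * Phi c d g s u + (1 - l) * Phi c d g s v - Phi c d g s (l * u + (1 - l) * v) := by
    rw [hGdef]
    rw [intervalIntegral.integral_sub ((Igu.const_mul _).add (Igv.const_mul _)) Igw]
    rw [intervalIntegral.integral_add (Igu.const_mul _) (Igv.const_mul _)]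
    rw [intervalIntegral.integral_const_mul, intervalIntegral.integral_const_mul]
    simp only [Phi]
  have := abs_integral_le hcd.le hFint hGint hpt
  rw [hIF, hIG] at this
  exact this

lemma hone_snd {a b c d : ℝ} (hab : a < b) (hcd : c < d) {g f : ℝ → ℝ → ℝ}
    (hdom : CoordConvexDominated a b c d g f) {t s₁ s₂ : ℝ}
    (ht0 : 0 ≤ t) (ht1 : t ≤ 1) (hs0 : 0 ≤ s₁) (hs12 : s₁ ≤ s₂) (hs1 : s₂ ≤ 1) :
    |Hone a b (Phi c d f s₂) t - Hone a b (Phi c d f s₁) t| ≤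
      Hone a b (Phi c d g s₂) t - Hone a b (Phi c d g s₁) t := by
  have hs0' : 0 ≤ s₂ := hs0.trans hs12
  have hs1' : s₁ ≤ 1 := hs12.trans hs1
  have If2 : IntervalIntegrable (fun x => Phi c d f s₂ (t * x + (1 - t) * (a + b) / 2))
      volume a b :=
    integrable_affine hab (dom_integrable_snd hab (phi_dominated hab hcd hdom hs0' hs1)) ht0 ht1
  have If1 : IntervalIntegrable (fun x => Phi c d f s₁ (t * x + (1 - t) * (a + b) / 2))
      volume a b :=
    integrable_affine hab (dom_integrable_snd hab (phi_dominated hab hcd hdom hs0 hs1')) ht0 ht1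
  have Ig2 : IntervalIntegrable (fun x => Phi c d g s₂ (t * x + (1 - t) * (a + b) / 2))
      volume a b :=
    integrable_affine hab (dom_integrable_fst hab (phi_dominated hab hcd hdom hs0' hs1)) ht0 ht1
  have Ig1 : IntervalIntegrable (fun x => Phi c d g s₁ (t * x + (1 - t) * (a + b) / 2))
      volume a b :=
    integrable_affine hab (dom_integrable_fst hab (phi_dominated hab hcd hdom hs0 hs1')) ht0 ht1
  set F : ℝ → ℝ := fun x => Phi c d f s₂ (t * x + (1 - t) * (a + b) / 2)
    - Phi c d f s₁ (t * x + (1 - t) * (a + b) / 2) with hFdef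
  set G : ℝ → ℝ := fun x => Phi c d g s₂ (t * x + (1 - t) * (a + b) / 2)
    - Phi c d g s₁ (t * x + (1 - t) * (a + b) / 2) with hGdef
  have hpt : ∀ x ∈ Icc a b, |F x| ≤ G x := by
    intro x hx
    have hx' := aff_mem hx ht0 ht1
    exact hone_key hcd (hdom.1 _ hx') hs0 hs12 hs1
  have hIF : (∫ x in a..b, F x) = Hone a b (Phi c d f s₂) t - Hone a b (Phi c d f s₁) t := by
    rw [hFdef, intervalIntegral.integral_sub If2 If1]
    simp only [Hone]
  have hIG : (∫ x in a..b, G x) = Hone a b (Phi c d g s₂) t - Hone a b (Phi c d g s₁) t := by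
    rw [hGdef, intervalIntegral.integral_sub Ig2 Ig1]
    simp only [Hone]
  have := abs_integral_le hab.le (If2.sub If1) (Ig2.sub Ig1) hpt
  rw [hIF, hIG] at this
  exact this

end Drag

theorem stmt17 (a b c d : ℝ) (hab : a < b) (hcd : c < d) (g f : ℝ → ℝ → ℝ)
    (hg : CoordConvexOn a b c d g) (hdom : CoordConvexDominated a b c d g f)
    (hfint : IntegrableOn (fun q : ℝ × ℝ => f q.1 q.2) (Set.Icc a b ×ˢ Set.Icc c d))
    (hgint : IntegrableOn (fun q : ℝ × ℝ => g q.1 q.2) (Set.Icc a b ×ˢ Set.Icc c d)) :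
    ∀ t₁ t₂ s₁ s₂ : ℝ, 0 ≤ t₁ → t₁ ≤ t₂ → t₂ ≤ 1 → 0 ≤ s₁ → s₁ ≤ s₂ → s₂ ≤ 1 →
      0 ≤ |Hmap a b c d f t₂ s₂ - Hmap a b c d f t₁ s₁| ∧
      |Hmap a b c d f t₂ s₂ - Hmap a b c d f t₁ s₁| ≤
        Hmap a b c d g t₂ s₂ - Hmap a b c d g t₁ s₁ := by
  intro t₁ t₂ s₁ s₂ ht0 ht12 ht1 hs0 hs12 hs1
  refine ⟨abs_nonneg _, ?_⟩
  have hk : 0 < 1 / ((b - a) * (d - c)) :=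
    div_pos one_pos (mul_pos (sub_pos.2 hab) (sub_pos.2 hcd))
  have e : ∀ (φ : ℝ → ℝ → ℝ) (t s : ℝ),
      Hmap a b c d φ t s = 1 / ((b - a) * (d - c)) * Drag.Hone a b (Drag.Phi c d φ s) t :=
    fun _ _ _ => rfl
  have hs0' : 0 ≤ s₂ := hs0.trans hs12
  have ht0' : 0 ≤ t₂ := ht0.trans ht12
  have ht1' : t₁ ≤ 1 := ht12.trans ht1
  have E1 := Drag.hone_key hab (Drag.phi_dominated hab hcd hdom hs0' hs1) ht0 ht12 ht1
  have E2 := Drag.hone_snd hab hcd hdom ht0 ht1' hs0 hs12 hs1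
  set X22 := Drag.Hone a b (Drag.Phi c d f s₂) t₂
  set X12 := Drag.Hone a b (Drag.Phi c d f s₂) t₁
  set X11 := Drag.Hone a b (Drag.Phi c d f s₁) t₁
  set Y22 := Drag.Hone a b (Drag.Phi c d g s₂) t₂
  set Y12 := Drag.Hone a b (Drag.Phi c d g s₂) t₁
  set Y11 := Drag.Hone a b (Drag.Phi c d g s₁) t₁
  have tri : |X22 - X11| ≤ Y22 - Y11 := by
    have h := abs_sub_le X22 X12 X11
    linarith
  rw [e f t₂ s₂, e f t₁ s₁, e g t₂ s₂, e g t₁ s₁]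
  rw [← mul_sub, ← mul_sub, abs_mul, abs_of_pos hk]
  exact mul_le_mul_of_nonneg_left tri hk.le
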